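/- arXiv:2112.14181 — 3 statements merged into one kernel-verified Lean document; each statement's English description precedes it below -/
import Mathlib

section
/- (Abstract nondegenerate pairing, injectivity of the dual map) In the setting of direct/inverse systems {V_i}, {W_i} with compatible bilinear forms B_i whose canonical maps are isomorphisms, and the induced pairing B on the limits: if v ∈ colim V_i satisfies B(v, w) = 0 for all w ∈ lim W_i, then v = 0. Equivalently, the canonical map colim V_i → Hom(lim W_i, 𝕂) is injective. -/
/-- Abstract nondegenerate pairing in the limit (injectivity of the dual map).
`V` is a direct system and `W` an inverse system of `𝕂`-vector spaces over a common
directed index set, with compatible bilinear forms `B i` whose canonical maps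
`W i → Hom(V i, 𝕂)` are isomorphisms.  `Vc` plays the role of `colim V`,
`Wc` of `lim W`, and `Bc` of the induced pairing on the limits.
Conclusion: the canonical map `colim V → Hom(lim W, 𝕂)` is injective. -/
theorem limit_pairing_dual_injective {𝕂 : Type*} [Field 𝕂]
    {ι : Type*} [Preorder ι] [IsDirected ι (· ≤ ·)]
    (V W : ι → Type*) [∀ i, AddCommGroup (V i)] [∀ i, Module 𝕂 (V i)]
    [∀ i, AddCommGroup (W i)] [∀ i, Module 𝕂 (W i)]
    (α : ∀ i j, i ≤ j → V i →ₗ[𝕂] V j) (β : ∀ i j, i ≤ j → W j →ₗ[𝕂] W i)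
    (B : ∀ i, V i →ₗ[𝕂] W i →ₗ[𝕂] 𝕂)
    (Vc Wc : Type*) [AddCommGroup Vc] [Module 𝕂 Vc] [AddCommGroup Wc] [Module 𝕂 Wc]
    (αc : ∀ i, V i →ₗ[𝕂] Vc) (βc : ∀ i, Wc →ₗ[𝕂] W i)
    (Bc : Vc →ₗ[𝕂] Wc →ₗ[𝕂] 𝕂)
    -- compatibility of the bonding maps with the canonical maps to/from the limits
    (hα : ∀ i j (h : i ≤ j) (v : V i), αc j (α i j h v) = αc i v)
    (hβ : ∀ i j (h : i ≤ j) (w : Wc), β i j h (βc j w) = βc i w)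
    -- every element of the colimit comes from some stage
    (hVexh : ∀ v : Vc, ∃ i, ∃ vi : V i, αc i vi = v)
    -- every compatible thread in the inverse system comes from the limit
    (hWlim : ∀ w : ∀ i, W i, (∀ i j (h : i ≤ j), β i j h (w j) = w i) →
      ∃ ω : Wc, ∀ i, βc i ω = w i)
    -- compatibility of the bilinear forms with the bonding maps
    (hcompat : ∀ i j (h : i ≤ j) (v : V i) (w : W j),
      B j (α i j h v) w = B i v (β i j h w))
    -- `Bc` is induced by the `B i`
    (hBc : ∀ i (v : V i) (w : Wc), Bc (αc i v) w = B i v (βc i w))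
    -- each canonical map `W i → Hom(V i, 𝕂)` is an isomorphism
    (hiso : ∀ i, Function.Bijective ⇑(B i).flip) :
    ∀ v : Vc, (∀ w : Wc, Bc v w = 0) → v = 0 := by
  intro v hv
  rw [← Module.forall_dual_apply_eq_zero_iff 𝕂]
  intro φ
  -- the thread of elements representing the functionals φ ∘ αc j
  let e : ∀ j, W j ≃ₗ[𝕂] Module.Dual 𝕂 (V j) :=
    fun j => LinearEquiv.ofBijective (B j).flip (hiso j)
  set w : ∀ j, W j := fun j => (e j).symm (φ ∘ₗ αc j) with hw
  have hwB : ∀ j (x : V j), B j x (w j) = φ (αc j x) := by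
    intro j x
    have : (B j).flip (w j) = φ ∘ₗ αc j := (e j).apply_symm_apply _
    simpa using congrArg (fun f => f x) this
  have hthread : ∀ i j (h : i ≤ j), β i j h (w j) = w i := by
    intro i j h
    apply (hiso i).injective
    ext x
    simp only [LinearMap.flip_apply]
    rw [← hcompat i j h x (w j), hwB, hwB, hα]
  obtain ⟨ω, hω⟩ := hWlim w hthread
  obtain ⟨i, vi, rfl⟩ := hVexh v
  have := hv ω
  rw [hBc, hω, hwB] at this
  exact this
end

section
/- (Reduction of eigenvalues to rational subspaces) Let E be a vector space over ℚ, g : E → E a ℚ-linear endomorphism, and suppose the induced ℂ-linear endomorphism ĝ on E ⊗_ℚ ℂ has an eigenvalue λ ∈ ℂ. Then λ is algebraic over ℚ, and there exists a nonzero vector w ∈ E and a finite-dimensional g-invariant subspace containing w such that the minimal polynomial of w under g equals the minimal polynomial P_λ of λ over ℚ (i.e. P_λ(g)(w) = 0 and no proper divisor of P_λ annihilates w). -/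
open Polynomial TensorProduct

noncomputable section Aux
variable {E : Type*} [AddCommGroup E] [Module ℚ E]

abbrev cIdx : Type := Module.Basis.ofVectorSpaceIndex ℚ ℂ
noncomputable def cBasis : Module.Basis cIdx ℚ ℂ := Module.Basis.ofVectorSpace ℚ ℂ
noncomputable def eEq (E : Type*) [AddCommGroup E] [Module ℚ E] :
    ℂ ⊗[ℚ] E ≃ₗ[ℚ] (cIdx →₀ E) :=
  (TensorProduct.congr cBasis.repr (LinearEquiv.refl ℚ E)).trans
    (TensorProduct.finsuppScalarLeft ℚ E cIdx)
lemma eEq_tmul_apply (c : ℂ) (x : E) (i : cIdx) :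
    eEq E (c ⊗ₜ[ℚ] x) i = cBasis.repr c i • x := by
  simp [eEq, TensorProduct.finsuppScalarLeft_apply_tmul_apply]

lemma eEq_basis_tmul (i : cIdx) (x : E) :
    eEq E (cBasis i ⊗ₜ[ℚ] x) = Finsupp.single i x := by
  ext j
  rw [eEq_tmul_apply, Module.Basis.repr_self, Finsupp.single_apply, Finsupp.single_apply]
  split <;> simp

lemma eEq_decomp (u : ℂ ⊗[ℚ] E) :
    u = ∑ i ∈ (eEq E u).support, cBasis i ⊗ₜ[ℚ] (eEq E u) i := by
  apply (eEq E).injective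
  rw [map_sum]
  simp_rw [eEq_basis_tmul]
  exact (Finsupp.sum_single (eEq E u)).symm

variable (g : E →ₗ[ℚ] E)

/-- the base change as a ℚ-endomorphism -/
noncomputable def bg : Module.End ℚ (ℂ ⊗[ℚ] E) :=
  (LinearMap.baseChange ℂ g).restrictScalars ℚ

lemma eEq_bg (u : ℂ ⊗[ℚ] E) (i : cIdx) : eEq E (bg g u) i = g (eEq E u i) := by
  induction u using TensorProduct.induction_on with
  | zero => simp
  | tmul c x => simp [bg, eEq_tmul_apply]
  | add x y hx hy => simp [map_add, hx, hy, Finsupp.add_apply]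

lemma aeval_bg_tmul (p : ℚ[X]) (c : ℂ) (x : E) :
    aeval (bg g) p (c ⊗ₜ[ℚ] x) = c ⊗ₜ[ℚ] (aeval g p x) := by
  have hpow : ∀ n : ℕ, (bg g ^ n) (c ⊗ₜ[ℚ] x) = c ⊗ₜ[ℚ] ((g ^ n) x) := by
    intro n
    induction n with
    | zero => simp
    | succ n ih =>
        rw [pow_succ', pow_succ', Module.End.mul_apply, Module.End.mul_apply, ih]
        simp [bg]
  induction p using Polynomial.induction_on' with
  | add p q hp hq => simp [map_add, hp, hq, tmul_add]
  | monomial n a =>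
      simp [aeval_monomial, Module.End.mul_apply, hpow, Module.algebraMap_end_apply,
        tmul_smul]

lemma aeval_bg_eigen {v : ℂ ⊗[ℚ] E} {lam : ℂ}
    (hv : LinearMap.baseChange ℂ g v = lam • v) (p : ℚ[X]) :
    aeval (bg g) p v = (aeval lam p) • v := by
  have hpow : ∀ n : ℕ, (bg g ^ n) v = lam ^ n • v := by
    intro n
    induction n with
    | zero => simp
    | succ n ih =>
        rw [pow_succ', Module.End.mul_apply, ih]
        show LinearMap.baseChange ℂ g (lam ^ n • v) = _
        rw [map_smul, hv, smul_smul, ← pow_succ]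
  induction p using Polynomial.induction_on' with
  | add p q hp hq => simp [map_add, hp, hq, add_smul]
  | monomial n a =>
      rw [aeval_monomial, aeval_monomial, Module.End.mul_apply, hpow,
        Module.algebraMap_end_apply, mul_smul, ← algebraMap_smul ℂ a]

lemma subtype_aeval (F : Submodule ℚ E) (hF : ∀ x ∈ F, g x ∈ F) (p : ℚ[X]) (x : F) :
    (aeval g p) (x : E) = ((aeval (g.restrict hF) p x : F) : E) := by
  induction p using Polynomial.induction_on' generalizing x with
  | add p q hp hq => simp [map_add, hp, hq]
  | monomial n a =>
      have hpow : ∀ (n : ℕ) (x : F), (g ^ n) (x : E) = (((g.restrict hF) ^ n) x : E) := by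
        intro n
        induction n with
        | zero => simp
        | succ n ih =>
            intro x
            rw [pow_succ, pow_succ, Module.End.mul_apply, Module.End.mul_apply]
            have hx : (g.restrict hF) x = ⟨g ↑x, hF ↑x x.2⟩ := rfl
            rw [hx]
            exact ih ⟨g ↑x, hF ↑x x.2⟩
    
      simp [aeval_monomial, Module.End.mul_apply, Module.algebraMap_end_apply, hpow]

end Aux

/-- Reduction of eigenvalues to rational subspaces: if the complexification
`ĝ = g ⊗ id` of a `ℚ`-linear endomorphism `g` of a `ℚ`-vector space `E` has an
eigenvalue `λ ∈ ℂ`, then `λ` is algebraic over `ℚ` and there is a nonzero `w ∈ E`,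
lying in a finite-dimensional `g`-invariant subspace, whose minimal polynomial
under `g` is exactly the minimal polynomial `P_λ` of `λ` over `ℚ`
(i.e. `P_λ(g) w = 0` and every `Q` with `Q(g) w = 0` is divisible by `P_λ`). -/
theorem eigenvalue_reduction_to_rational {E : Type*} [AddCommGroup E] [Module ℚ E]
    (g : E →ₗ[ℚ] E) (lam : ℂ)
    (h : Module.End.HasEigenvalue (LinearMap.baseChange ℂ g) lam) :
    IsAlgebraic ℚ lam ∧
    ∃ w : E, w ≠ 0 ∧
      (∃ F : Submodule ℚ E, FiniteDimensional ℚ F ∧ w ∈ F ∧ F.map g ≤ F) ∧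
      (aeval (g : Module.End ℚ E) (minpoly ℚ lam)) w = 0 ∧
      ∀ Q : ℚ[X], (aeval (g : Module.End ℚ E) Q) w = 0 → minpoly ℚ lam ∣ Q := by
  obtain ⟨v, hv⟩ := h.exists_hasEigenvector
  have hv0 : v ≠ 0 := hv.right
  have heig : LinearMap.baseChange ℂ g v = lam • v := hv.apply_eq_smul
  have heig' : bg g v = lam • v := heig
  set f : cIdx →₀ E := eEq E v with hf
  have hfne : f ≠ 0 := fun h0 => hv0 ((LinearEquiv.map_eq_zero_iff _).mp (hf ▸ h0))
  set F : Submodule ℚ E := Submodule.span ℚ (f '' ↑f.support) with hF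
  have hmemF : ∀ i, f i ∈ F := by
    intro i
    by_cases hi : i ∈ f.support
    · exact Submodule.subset_span ⟨i, hi, rfl⟩
    · rw [Finsupp.notMem_support_iff.mp hi]; exact F.zero_mem
  have hFfin : FiniteDimensional ℚ F :=
    FiniteDimensional.span_of_finite ℚ (f.support.finite_toSet.image f)
  have hdecomp : v = ∑ i ∈ f.support, cBasis i ⊗ₜ[ℚ] f i := by
    rw [hf]; exact eEq_decomp v
  have hlamv : lam • v = ∑ j ∈ f.support, (lam * cBasis j) ⊗ₜ[ℚ] f j := by
    conv_lhs => rw [hdecomp]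
    rw [Finset.smul_sum]
    exact Finset.sum_congr rfl fun j _ => by rw [smul_tmul', smul_eq_mul]
  have hkey : ∀ i, g (f i) ∈ F := by
    intro i
    have h1 : g (f i) = eEq E (lam • v) i := by
      rw [hf, ← eEq_bg g v i, heig']
    rw [h1, hlamv, map_sum, Finsupp.finset_sum_apply]
    refine Submodule.sum_mem _ fun j _ => ?_
    rw [eEq_tmul_apply]
    exact Submodule.smul_mem _ _ (hmemF j)
  have hmap : F.map g ≤ F := by
    conv_lhs => rw [hF]
    rw [Submodule.map_span, Submodule.span_le]
    rintro y ⟨x, hx, rfl⟩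
    obtain ⟨i, _, rfl⟩ := hx
    exact hkey i
  have hginv : ∀ x ∈ F, g x ∈ F := fun x hx => hmap ⟨x, hx, rfl⟩
  let g' := g.restrict hginv
  let P := LinearMap.charpoly g'
  have hPmo : P.Monic := LinearMap.charpoly_monic g'
  have hPg : ∀ x (hx : x ∈ F), aeval g P x = 0 := by
    intro x hx
    rw [show x = ((⟨x, hx⟩ : F) : E) from rfl, subtype_aeval g F hginv P]
    rw [show aeval (g.restrict hginv) P = 0 from LinearMap.aeval_self_charpoly g']
    rfl
  have hPv : aeval (bg g) P v = 0 := by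
    conv_lhs => rw [hdecomp]
    rw [map_sum]
    refine Finset.sum_eq_zero fun i _ => ?_
    rw [aeval_bg_tmul, hPg _ (hmemF i), tmul_zero]
  have hPlam : (aeval lam) P = 0 := by
    have h2 := aeval_bg_eigen g heig P
    rw [hPv] at h2
    exact (smul_eq_zero.mp h2.symm).resolve_right hv0
  have halg : IsAlgebraic ℚ lam := ⟨P, hPmo.ne_zero, hPlam⟩
  have hint : IsIntegral ℚ lam := halg.isIntegral
  have hminv : aeval (bg g) (minpoly ℚ lam) v = 0 := by
    rw [aeval_bg_eigen g heig, minpoly.aeval, zero_smul]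
  have hcomp : ∀ j ∈ f.support, aeval g (minpoly ℚ lam) (f j) = 0 := by
    intro j hj
    have h4 : (0 : ℂ ⊗[ℚ] E)
        = ∑ i ∈ f.support, cBasis i ⊗ₜ[ℚ] aeval g (minpoly ℚ lam) (f i) := by
      rw [← hminv]
      conv_lhs => rw [hdecomp]
      rw [map_sum]
      exact Finset.sum_congr rfl fun i _ => aeval_bg_tmul g _ _ _
    have h5 := congrArg (fun u => eEq E u j) h4.symm
    simp only [map_sum, eEq_basis_tmul, map_zero, Finsupp.coe_zero, Pi.zero_apply,
      Finsupp.finset_sum_apply] at h5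
    rwa [Finset.sum_eq_single j
      (fun i _ hij => Finsupp.single_eq_of_ne' hij)
      (fun hj' => absurd hj hj'), Finsupp.single_eq_same] at h5
  obtain ⟨j, hj⟩ := Finsupp.support_nonempty_iff.mpr hfne
  have hw0 : f j ≠ 0 := Finsupp.mem_support_iff.mp hj
  refine ⟨halg, f j, hw0, ⟨F, hFfin, hmemF j, hmap⟩, hcomp j hj, ?_⟩
  intro Q hQ
  have hirr := minpoly.irreducible hint
  have hdp : EuclideanDomain.gcd (minpoly ℚ lam) Q ∣ minpoly ℚ lam :=
    EuclideanDomain.gcd_dvd_left _ _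
  have hdw : aeval g (EuclideanDomain.gcd (minpoly ℚ lam) Q) (f j) = 0 := by
    rw [EuclideanDomain.gcd_eq_gcd_ab (minpoly ℚ lam) Q,
      mul_comm (minpoly ℚ lam), mul_comm Q]
    simp only [map_add, map_mul, LinearMap.add_apply, Module.End.mul_apply,
      hcomp j hj, hQ, map_zero, add_zero]
  obtain ⟨e, he⟩ := hdp
  rcases hirr.isUnit_or_isUnit he with hu | hu
  · exfalso
    obtain ⟨c, hc, hcd⟩ := Polynomial.isUnit_iff.mp hu
    rw [← hcd, aeval_C, Module.algebraMap_end_apply] at hdw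
    exact hw0 (by simpa [hc.ne_zero] using smul_eq_zero.mp hdw)
  · rw [he]
    exact (hu.mul_right_dvd).mpr (EuclideanDomain.gcd_dvd_right _ _)
end

section
/- (Construction of an eigenvector with algebraic coefficients) Let E be a ℚ-vector space, g : E → E ℚ-linear, and w ∈ E a nonzero vector whose minimal polynomial under g is P(t) = (t−λ₁)⋯(t−λ_d) ∈ ℚ[t], irreducible over ℚ, with complex roots λ₁ = λ, λ₂, …, λ_d. Then z := (ĝ − λ₂)⋯(ĝ − λ_d)(w ⊗ 1) ∈ E ⊗_ℚ ℂ is a nonzero eigenvector of ĝ with eigenvalue λ, and z = Σ_{j=0}^{d−1} μ_j (g^{d−1−j} w ⊗ 1) where each μ_j ∈ ℂ is an algebraic number and μ₀ = 1. -/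
open Polynomial
open scoped TensorProduct

/-- Construction of an eigenvector with algebraic coefficients.  Let `g` be a
`ℚ`-linear endomorphism of a `ℚ`-vector space `E` and `w ≠ 0` a vector whose minimal
polynomial under `g` is the irreducible `P ∈ ℚ[X]`, with complex roots
`λ 0, λ 1, …, λ d` (so `deg P = d + 1`).  Then
`z := (ĝ − λ 1)⋯(ĝ − λ d) (1 ⊗ w)` in `ℂ ⊗_ℚ E` is a nonzero eigenvector of the
complexification `ĝ` with eigenvalue `λ 0`, and
`z = Σ_{j=0}^{d} μ_j (g^{d−j} w ⊗ 1)` where each `μ_j ∈ ℂ` is algebraic and `μ₀ = 1`. -/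
theorem eigenvector_with_algebraic_coefficients {E : Type*} [AddCommGroup E]
    [Module ℚ E] (g : E →ₗ[ℚ] E) (d : ℕ) (lam : Fin (d + 1) → ℂ) (P : ℚ[X])
    (hirr : Irreducible P)
    (hP : P.map (algebraMap ℚ ℂ) = ∏ j : Fin (d + 1), (X - C (lam j)))
    (w : E) (hw : w ≠ 0)
    (hPw : (aeval (g : Module.End ℚ E) P) w = 0)
    (hmin : ∀ Q : ℚ[X], (aeval (g : Module.End ℚ E) Q) w = 0 → P ∣ Q) :
    ∃ μ : Fin (d + 1) → ℂ, μ 0 = 1 ∧ (∀ j, IsAlgebraic ℚ (μ j)) ∧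
      ∀ z : ℂ ⊗[ℚ] E,
        z = (aeval (LinearMap.baseChange ℂ g)
              (∏ j ∈ Finset.univ.erase (0 : Fin (d + 1)), (X - C (lam j))))
              ((1 : ℂ) ⊗ₜ[ℚ] w) →
        z ≠ 0 ∧ LinearMap.baseChange ℂ g z = lam 0 • z ∧
          z = ∑ j : Fin (d + 1), μ j • ((1 : ℂ) ⊗ₜ[ℚ] ((g ^ (d - (j : ℕ))) w)) := by
  classical
  have hPne : P ≠ 0 := hirr.ne_zero
  have hinj : Function.Injective (algebraMap ℚ ℂ) := (algebraMap ℚ ℂ).injective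
  -- degree of P
  have hdegP : P.natDegree = d + 1 := by
    have h1 : (P.map (algebraMap ℚ ℂ)).natDegree = P.natDegree :=
      natDegree_map_eq_of_injective hinj P
    rw [hP] at h1
    rw [← h1, natDegree_prod _ _ (fun j _ => X_sub_C_ne_zero (lam j))]
    simp [natDegree_X_sub_C]
  set Qc : ℂ[X] := ∏ j ∈ Finset.univ.erase (0 : Fin (d + 1)), (X - C (lam j)) with hQcdef
  have hQmonic : Qc.Monic := monic_prod_of_monic _ _ fun j _ => monic_X_sub_C (lam j)
  have hQdeg : Qc.natDegree = d := by
    rw [hQcdef, natDegree_prod _ _ (fun j _ => X_sub_C_ne_zero (lam j))]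
    simp [natDegree_X_sub_C, Finset.card_erase_of_mem]
  refine ⟨fun j => Qc.coeff (d - (j : ℕ)), ?_, ?_, ?_⟩
  · -- μ 0 = 1
    have := hQmonic.coeff_natDegree
    rw [hQdeg] at this
    simpa using this
  · -- algebraicity of the coefficients
    intro j
    have hlamAlg : ∀ k : Fin (d + 1), IsAlgebraic ℚ (lam k) := by
      intro k
      refine ⟨P, hPne, ?_⟩
      rw [aeval_def, ← eval_map, hP, eval_prod]
      exact Finset.prod_eq_zero (Finset.mem_univ k) (by simp)
    have hint : ∀ k : Fin (d + 1), IsIntegral ℚ (lam k) := fun k => (hlamAlg k).isIntegral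
    set A := integralClosure ℚ ℂ with hA
    let lamA : Fin (d + 1) → A := fun k => ⟨lam k, hint k⟩
    set QA : A[X] := ∏ k ∈ Finset.univ.erase (0 : Fin (d + 1)), (X - C (lamA k)) with hQA
    have hmap : Qc = QA.map (algebraMap A ℂ) := by
      rw [hQA, Polynomial.map_prod, hQcdef]
      exact Finset.prod_congr rfl fun x _ => by
        rw [Polynomial.map_sub, map_X, map_C]; rfl
    have h2 : Qc.coeff (d - (j : ℕ)) = algebraMap A ℂ (QA.coeff (d - (j : ℕ))) := by
      rw [hmap, coeff_map]
    show IsAlgebraic ℚ (Qc.coeff (d - (j : ℕ)))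
    rw [h2]
    exact (IsIntegral.isAlgebraic (QA.coeff (d - (j : ℕ))).2)
  · -- main statement
    intro z hz
    -- powers of the base change
    have hpow : ∀ n : ℕ, (LinearMap.baseChange ℂ g ^ n) ((1 : ℂ) ⊗ₜ[ℚ] w)
        = (1 : ℂ) ⊗ₜ[ℚ] ((g ^ n) w) := by
      intro n
      rw [← LinearMap.baseChange_pow, LinearMap.baseChange_tmul]
    -- express z as a sum
    have hzsum : z = ∑ i : Fin (d + 1), Qc.coeff (i : ℕ) • ((1 : ℂ) ⊗ₜ[ℚ] ((g ^ (i : ℕ)) w)) := by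
      rw [hz, aeval_eq_sum_range' (n := d + 1) (by rw [hQdeg]; omega)]
      rw [Fin.sum_univ_eq_sum_range fun i => Qc.coeff i • ((1 : ℂ) ⊗ₜ[ℚ] ((g ^ i) w))]
      simp only [LinearMap.sum_apply, LinearMap.smul_apply, hpow]
    -- linear independence via a left inverse
    let v : Fin (d + 1) → E := fun i => (g ^ (i : ℕ)) w
    let ψ : (Fin (d + 1) → ℚ) →ₗ[ℚ] E :=
      ∑ i : Fin (d + 1), (LinearMap.toSpanSingleton ℚ E (v i)).comp (LinearMap.proj i)
    have hψ : ∀ c : Fin (d + 1) → ℚ, ψ c = ∑ i : Fin (d + 1), c i • v i := by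
      intro c
      simp [ψ, LinearMap.toSpanSingleton]
    have hψinj : LinearMap.ker ψ = ⊥ := by
      rw [LinearMap.ker_eq_bot']
      intro c hc
      set Rp : ℚ[X] := ∑ i : Fin (d + 1), C (c i) * X ^ (i : ℕ) with hRpdef
      have hcoeff : ∀ k : Fin (d + 1), Rp.coeff (k : ℕ) = c k := by
        intro k
        rw [hRpdef, finset_sum_coeff]
        simp only [coeff_C_mul, coeff_X_pow]
        rw [Finset.sum_eq_single k (by intro b _ hb; simp [Fin.val_eq_val, hb, Ne.symm hb])
          (by simp)]
        simp
      have haev : (aeval (g : Module.End ℚ E) Rp) w = 0 := by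
        rw [hRpdef, map_sum]
        have : (∑ i : Fin (d + 1),
            (aeval (g : Module.End ℚ E)) (C (c i) * X ^ (i : ℕ))) w
            = ∑ i : Fin (d + 1), c i • v i := by
          simp [v, Module.algebraMap_end_apply, LinearMap.sum_apply, Module.End.mul_apply]
        rw [this, ← hψ, hc]
      have hdvd : P ∣ Rp := hmin _ haev
      have hRp0 : Rp = 0 := by
        by_contra h
        have hled := Polynomial.natDegree_le_of_dvd hdvd h
        have hle : Rp.natDegree ≤ d := by
          rw [natDegree_le_iff_coeff_eq_zero]
          intro m hm
          rw [hRpdef, finset_sum_coeff]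
          apply Finset.sum_eq_zero
          intro i _
          have : (i : ℕ) ≠ m := by have := i.isLt; omega
          simp [coeff_C_mul, coeff_X_pow, this, Ne.symm this]
        omega
      funext k
      rw [← hcoeff k, hRp0]
      simp
    obtain ⟨π, hπ⟩ := ψ.exists_leftInverse_of_injective hψinj
    have hπv : ∀ i : Fin (d + 1), π (v i) = Pi.single i 1 := by
      intro i
      have h1 : ψ (Pi.single i 1) = v i := by
        rw [hψ]
        rw [Finset.sum_eq_single i (by intro b _ hb; simp [Pi.single_apply, hb]) (by simp)]
        simp
      rw [← h1, ← LinearMap.comp_apply, hπ, LinearMap.id_apply]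
    let T : ℂ ⊗[ℚ] E →ₗ[ℂ] (Fin (d + 1) → ℂ) :=
      (TensorProduct.piScalarRightHom ℚ ℂ ℂ (Fin (d + 1))).comp (π.baseChange ℂ)
    have hT : ∀ i : Fin (d + 1), T ((1 : ℂ) ⊗ₜ[ℚ] (v i)) = Pi.single i 1 := by
      intro i
      simp only [T, LinearMap.comp_apply, LinearMap.baseChange_tmul, hπv,
        TensorProduct.piScalarRightHom_tmul]
      funext j
      by_cases hji : j = i <;> simp [Pi.single_apply, hji]
    have hTz : T z = ∑ i : Fin (d + 1), Qc.coeff (i : ℕ) • (Pi.single i 1 : Fin (d + 1) → ℂ) := by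
      rw [hzsum, map_sum]
      congr 1
      funext i
      rw [map_smul, hT i]
    have hTzlast : T z (Fin.last d) = 1 := by
      rw [hTz]
      have : ∀ i : Fin (d + 1),
          (Qc.coeff (i : ℕ) • (Pi.single i 1 : Fin (d + 1) → ℂ)) (Fin.last d)
          = if i = Fin.last d then Qc.coeff (i : ℕ) else 0 := by
        intro i
        by_cases hi : i = Fin.last d <;> simp [Pi.single_apply, hi, eq_comm]
      rw [Finset.sum_apply, Finset.sum_congr rfl fun i _ => this i, Finset.sum_ite_eq'
        Finset.univ (Fin.last d) fun i => Qc.coeff (i : ℕ)]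
      have h1 : Qc.coeff d = 1 := by
        have h := hQmonic.coeff_natDegree
        rwa [hQdeg] at h
      simpa using h1
    refine ⟨?_, ?_, ?_⟩
    · -- z ≠ 0
      intro h0
      rw [h0, map_zero] at hTzlast
      simp at hTzlast
    · -- eigenvector equation
      have hPfac : P.map (algebraMap ℚ ℂ) = (X - C (lam 0)) * Qc := by
        rw [hP, hQcdef, ← Finset.mul_prod_erase _ _ (Finset.mem_univ (0 : Fin (d + 1)))]
      have h0 : (aeval (LinearMap.baseChange ℂ g) (P.map (algebraMap ℚ ℂ)))
          ((1 : ℂ) ⊗ₜ[ℚ] w) = 0 := by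
        rw [aeval_map_algebraMap]
        have hbc : LinearMap.baseChange ℂ g
            = Module.End.baseChangeHom ℚ ℂ E (g : Module.End ℚ E) := rfl
        rw [hbc, Polynomial.aeval_algHom_apply]
        show LinearMap.baseChange ℂ ((aeval (g : Module.End ℚ E)) P) ((1 : ℂ) ⊗ₜ[ℚ] w) = 0
        rw [LinearMap.baseChange_tmul, hPw, TensorProduct.tmul_zero]
      rw [hPfac, map_mul, map_sub, aeval_X, aeval_C, Module.End.mul_apply] at h0
      rw [LinearMap.sub_apply, Module.algebraMap_end_apply, sub_eq_zero, ← hz] at h0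
      exact h0
    · -- the explicit sum
      rw [hzsum, ← Equiv.sum_comp (Fin.revPerm : Equiv.Perm (Fin (d + 1)))
        fun j => Qc.coeff (d - (j : ℕ)) • ((1 : ℂ) ⊗ₜ[ℚ] ((g ^ (d - (j : ℕ))) w))]
      apply Finset.sum_congr rfl
      intro i _
      have hrev : d - ((Fin.revPerm i : Fin (d + 1)) : ℕ) = (i : ℕ) := by
        simp only [Fin.revPerm_apply, Fin.val_rev]
        have := i.isLt
        omega
      rw [hrev]
end
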